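/- Let a < b be reals, let U_n be an (n+1)-dimensional subspace of C^n([a,b],ℝ) possessing a non-negative Bernstein basis p_{n,0},…,p_{n,n}, let f_0 ∈ U_n be strictly positive on [a,b], and suppose D_{f_0}U_n := { (f/f_0)′ : f ∈ U_n } possesses a positive Bernstein basis q_{n-1,0},…,q_{n-1,n-1} (each q_{n-1,k} > 0 on (a,b)). Let f_1 ∈ U_n be such that f_1/f_0 is strictly increasing on [a,b]. If there exist nodes t_{n,0} ≤ t_{n,1} ≤ ⋯ ≤ t_{n,n} in [a,b] and strictly positive weights α_{n,0},…,α_{n,n} such that the operator B_n f = Σ_{k=0}^n f(t_{n,k}) α_{n,k} p_{n,k} fixes f_0 and f_1, then (f_1/f_0)′(x) > 0 for all x ∈ (a,b). -/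

import Mathlib

open Set Filter Topology

noncomputable section

lemma myIteratedDerivWithin_of_isOpen {W : Set ℝ} (hW : IsOpen W) {x : ℝ} (hx : x ∈ W)
    (m : ℕ) (f : ℝ → ℝ) : iteratedDerivWithin m f W x = iteratedDeriv m f x := by
  simp only [iteratedDerivWithin, iteratedDeriv, iteratedFDerivWithin_of_isOpen m hW hx]

lemma myIteratedDeriv_zeroFun (m : ℕ) (x : ℝ) :
    iteratedDeriv m (fun _ : ℝ => (0:ℝ)) x = 0 := by
  induction m generalizing x with
  | zero => simp
  | succ k ih =>
    rw [iteratedDeriv_succ']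
    have : deriv (fun _ : ℝ => (0:ℝ)) = fun _ : ℝ => (0:ℝ) := by
      funext y; simp
    rw [this, ih]

lemma myIteratedDeriv_sum {W : Set ℝ} (hW : IsOpen W) {x : ℝ} (hx : x ∈ W)
    {N : ℕ} (φ : Fin N → ℝ → ℝ) (c : Fin N → ℝ) {m i : ℕ} (him : i ≤ m)
    (hφ : ∀ j, ContDiffOn ℝ m (φ j) W) (s : Finset (Fin N)) :
    iteratedDeriv i (fun y => ∑ j ∈ s, c j * φ j y) x
      = ∑ j ∈ s, c j * iteratedDeriv i (φ j) x := by
  classical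
  induction s using Finset.induction with
  | empty => simpa using myIteratedDeriv_zeroFun i x
  | insert j s' hji ih =>
    simp only [Finset.sum_insert hji]
    rw [← ih]
    have hsum : ContDiffOn ℝ i (fun y => ∑ j ∈ s', c j * φ j y) W := by
      apply ContDiffOn.sum
      intro j _
      exact ((hφ j).of_le (by exact_mod_cast him)).const_smul (c j) |>.congr (fun y _ => by simp [smul_eq_mul])
    have hj : ContDiffOn ℝ i (fun y => c j * φ j y) W :=
      ((hφ j).of_le (by exact_mod_cast him)).const_smul (c j) |>.congr (fun y _ => by simp [smul_eq_mul])
    have hadd := iteratedDerivWithin_add (f := fun y => c j * φ j y)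
      (g := fun y => ∑ j ∈ s', c j * φ j y) hx hW.uniqueDiffOn (hj x hx) (hsum x hx)
    have h1 : iteratedDeriv i (fun y => c j * φ j y + ∑ j ∈ s', c j * φ j y) x
        = iteratedDeriv i (fun y => c j * φ j y) x + iteratedDeriv i (fun y => ∑ j ∈ s', c j * φ j y) x := by
      rw [← myIteratedDerivWithin_of_isOpen hW hx, ← myIteratedDerivWithin_of_isOpen hW hx,
        ← myIteratedDerivWithin_of_isOpen hW hx]
      exact hadd
    have h2 : iteratedDeriv i (fun y => c j * φ j y) x = c j * iteratedDeriv i (φ j) x := by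
      rw [← myIteratedDerivWithin_of_isOpen hW hx, ← myIteratedDerivWithin_of_isOpen hW hx]
      exact iteratedDerivWithin_const_mul hx hW.uniqueDiffOn (c j) (((hφ j).of_le (by exact_mod_cast him)) x hx)
    rw [h1, h2]

lemma myTendsto_div_pow {W : Set ℝ} (hW : IsOpen W) {a : ℝ} (ha : a ∈ W)
    {m : ℕ} {f : ℝ → ℝ} (hf : ContDiffOn ℝ m f W)
    (h0 : ∀ j, j < m → iteratedDeriv j f a = 0) :
    Tendsto (fun x => f x / (x - a) ^ m) (𝓝[>] a) (𝓝 (iteratedDeriv m f a / (m.factorial : ℝ))) := by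
  induction m generalizing f with
  | zero =>
    simp only [pow_zero, div_one, Nat.factorial_zero, Nat.cast_one, iteratedDeriv_zero]
    exact tendsto_nhdsWithin_of_tendsto_nhds
      ((hf.continuousOn.continuousAt (hW.mem_nhds ha)).tendsto)
  | succ m ih =>
    obtain ⟨ε, hε, hball⟩ := Metric.isOpen_iff.1 hW a ha
    set b := a + ε with hb
    have hab : a < b := by simp [hb, hε]
    have hIoo : Ioo a b ⊆ W := by
      intro y hy
      apply hball
      rw [Real.ball_eq_Ioo]
      refine ⟨by linarith [hy.1], ?_⟩
      rw [← hb]; exact hy.2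
    have hdf : DifferentiableOn ℝ f (Ioo a b) :=
      (hf.differentiableOn (by simp)).mono hIoo
    have hderivf : ContDiffOn ℝ m (deriv f) W := hf.deriv_of_isOpen hW (by exact_mod_cast le_refl (m+1))
    have h0' : ∀ j, j < m → iteratedDeriv j (deriv f) a = 0 := by
      intro j hj
      rw [← iteratedDeriv_succ']
      exact h0 (j+1) (by omega)
    have hIH := ih hderivf h0'
    have key : Tendsto (fun x => deriv f x / deriv (fun y => (y - a) ^ (m+1)) x) (𝓝[>] a)
        (𝓝 (iteratedDeriv (m+1) f a / ((m+1).factorial : ℝ))) := by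
      have hg : deriv (fun y : ℝ => (y - a) ^ (m+1)) = fun y => (m+1) * (y - a) ^ m := by
        funext y
        have : HasDerivAt (fun y : ℝ => (y - a) ^ (m+1)) ((m+1) * (y - a) ^ m * 1) y := by
          exact ((hasDerivAt_id y).sub_const a).pow (m+1) |>.congr_deriv (by push_cast; simp only [id_eq]; try ring)
        simpa using this.deriv
      rw [hg]
      have : (fun x => deriv f x / ((m+1) * (x - a) ^ m))
          = fun x => (deriv f x / (x - a)^m) / (m+1) := by
        funext x; rw [div_div]; ring_nf
      rw [this]
      have heq : iteratedDeriv m (deriv f) a / (m.factorial:ℝ) / ((m:ℝ)+1)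
          = iteratedDeriv (m+1) f a / ((m+1).factorial : ℝ) := by
        rw [← iteratedDeriv_succ', div_div]
        congr 1
        rw [Nat.factorial_succ]
        push_cast
        ring
      rw [← heq]
      exact hIH.div_const ((m:ℝ)+1)
    apply deriv.lhopital_zero_right_on_Ioo hab hdf
    · intro x hx
      have : deriv (fun y : ℝ => (y - a) ^ (m+1)) x = (m+1) * (x - a)^m := by
        have : HasDerivAt (fun y : ℝ => (y - a) ^ (m+1)) ((m+1) * (x - a) ^ m * 1) x :=
          ((hasDerivAt_id x).sub_const a).pow (m+1) |>.congr_deriv (by push_cast; simp only [id_eq]; try ring)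
        simpa using this.deriv
      rw [this]
      have : (0:ℝ) < x - a := by linarith [hx.1]
      positivity
    · have hfa : f a = 0 := by simpa using h0 0 (Nat.succ_pos m)
      rw [← hfa]
      exact tendsto_nhdsWithin_of_tendsto_nhds
        ((hf.continuousOn.continuousAt (hW.mem_nhds ha)).tendsto)
    · have : Tendsto (fun x : ℝ => (x - a) ^ (m+1)) (𝓝 a) (𝓝 ((a - a)^(m+1))) := by
        exact (continuous_id.sub continuous_const).pow (m+1) |>.tendsto a
      simpa using tendsto_nhdsWithin_of_tendsto_nhds this
    · exact key

lemma mySignA {W : Set ℝ} (hW : IsOpen W) {a b : ℝ} (hab : a < b) (ha : a ∈ W)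
    {m : ℕ} {f : ℝ → ℝ} (hf : ContDiffOn ℝ m f W)
    (h0 : ∀ j, j < m → iteratedDeriv j f a = 0)
    (hnn : ∀ x ∈ Ioo a b, 0 ≤ f x) :
    0 ≤ iteratedDeriv m f a := by
  have htend := myTendsto_div_pow hW ha hf h0
  have hev : ∀ᶠ x in 𝓝[>] a, 0 ≤ f x / (x - a) ^ m := by
    filter_upwards [Ioo_mem_nhdsGT_of_mem ⟨le_refl a, hab⟩] with x hx
    have h1 : (0:ℝ) < x - a := by linarith [hx.1]
    exact div_nonneg (hnn x hx) (by positivity)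
  have hle : 0 ≤ iteratedDeriv m f a / (m.factorial : ℝ) := ge_of_tendsto htend hev
  have hm : (0:ℝ) < (m.factorial : ℝ) := by exact_mod_cast m.factorial_pos
  by_contra hneg
  push_neg at hneg
  have : iteratedDeriv m f a / (m.factorial : ℝ) < 0 := div_neg_of_neg_of_pos hneg hm
  linarith

lemma myReflect (c : ℝ) (f : ℝ → ℝ) (j : ℕ) (x : ℝ) :
    iteratedDeriv j (fun y => f (c - y)) x = (-1:ℝ)^j * iteratedDeriv j f (c - x) := by
  have h1 : (fun y : ℝ => f (c - y)) = fun y : ℝ => (fun z => f (c + z)) (-y) := by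
    funext y; simp [sub_eq_add_neg]
  rw [h1, iteratedDeriv_comp_neg j (fun z => f (c + z)) x,
    iteratedDeriv_comp_const_add j f c]
  simp [smul_eq_mul, sub_eq_add_neg]

lemma mySignB {W : Set ℝ} (hW : IsOpen W) {a b : ℝ} (hab : a < b) (hb : b ∈ W)
    {m : ℕ} {f : ℝ → ℝ} (hf : ContDiffOn ℝ m f W)
    (h0 : ∀ j, j < m → iteratedDeriv j f b = 0)
    (hnn : ∀ x ∈ Ioo a b, 0 ≤ f x) :
    0 ≤ (-1:ℝ)^m * iteratedDeriv m f b := by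
  set c := a + b with hc
  set F : ℝ → ℝ := fun y => f (c - y) with hF
  have hW' : IsOpen ((fun y : ℝ => c - y) ⁻¹' W) :=
    hW.preimage (continuous_const.sub continuous_id)
  have haW' : a ∈ (fun y : ℝ => c - y) ⁻¹' W := by
    simp only [mem_preimage, hc]; simpa using hb
  have hFc : ContDiffOn ℝ m F ((fun y : ℝ => c - y) ⁻¹' W) := by
    apply hf.comp
    · exact (contDiff_const.sub contDiff_id).contDiffOn
    · intro y hy; exact hy
  have h0' : ∀ j, j < m → iteratedDeriv j F a = 0 := by
    intro j hj
    rw [hF, myReflect]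
    have : c - a = b := by rw [hc]; ring
    rw [this, h0 j hj, mul_zero]
  have hnn' : ∀ x ∈ Ioo a b, 0 ≤ F x := by
    intro x hx
    apply hnn
    constructor <;> [skip; skip] <;> simp only [hc] <;> [linarith [hx.2]; linarith [hx.1]]
  have := mySignA hW' hab haW' hFc h0' hnn'
  rwa [hF, myReflect, show c - a = b from by rw [hc]; ring] at this

lemma myIteratedDeriv_add {W : Set ℝ} (hW : IsOpen W) {x : ℝ} (hx : x ∈ W)
    {m : ℕ} {f g : ℝ → ℝ} (hf : ContDiffOn ℝ m f W) (hg : ContDiffOn ℝ m g W) :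
    iteratedDeriv m (fun y => f y + g y) x = iteratedDeriv m f x + iteratedDeriv m g x := by
  rw [← myIteratedDerivWithin_of_isOpen hW hx, ← myIteratedDerivWithin_of_isOpen hW hx,
    ← myIteratedDerivWithin_of_isOpen hW hx]
  exact iteratedDerivWithin_add hx hW.uniqueDiffOn (hf x hx) (hg x hx)

lemma myLeibniz {W : Set ℝ} (hW : IsOpen W) {a : ℝ} (ha : a ∈ W) {m : ℕ} {u v : ℝ → ℝ}
    (hu : ContDiffOn ℝ m u W) (hv : ContDiffOn ℝ m v W)
    (h0 : ∀ j, j < m → iteratedDeriv j u a = 0) :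
    iteratedDeriv m (fun x => u x * v x) a = iteratedDeriv m u a * v a := by
  induction m generalizing u v with
  | zero => simp
  | succ m ih =>
    have hu' : ContDiffOn ℝ m (deriv u) W := hu.deriv_of_isOpen hW (by norm_cast)
    have hv' : ContDiffOn ℝ m (deriv v) W := hv.deriv_of_isOpen hW (by norm_cast)
    have hum : ContDiffOn ℝ m u W := hu.of_le (by exact_mod_cast Nat.le_succ m)
    have hvm : ContDiffOn ℝ m v W := hv.of_le (by exact_mod_cast Nat.le_succ m)
    have hdiffu : ∀ x ∈ W, DifferentiableAt ℝ u x := fun x hx =>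
      (hu.differentiableOn (by simp)).differentiableAt
        (hW.mem_nhds hx)
    have hdiffv : ∀ x ∈ W, DifferentiableAt ℝ v x := fun x hx =>
      (hv.differentiableOn (by simp)).differentiableAt
        (hW.mem_nhds hx)
    have hEq : (deriv fun y => u y * v y) =ᶠ[𝓝 a]
        (fun x => deriv u x * v x + u x * deriv v x) := by
      filter_upwards [hW.mem_nhds ha] with x hx
      exact deriv_mul (hdiffu x hx) (hdiffv x hx)
    rw [iteratedDeriv_succ', Filter.EventuallyEq.iteratedDeriv_eq m hEq,
      myIteratedDeriv_add hW ha (hu'.mul hvm) (hum.mul hv'),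
      ih hu' hvm (fun j hj => by rw [← iteratedDeriv_succ']; exact h0 (j+1) (by omega)),
      ih hum hv' (fun j hj => h0 j (by omega)),
      h0 m (Nat.lt_succ_self m), zero_mul, add_zero, ← iteratedDeriv_succ']

/-- `p k`, `k = 0, …, n`, is a Bernstein basis of the `(n+1)`-dimensional subspace `U` of
`C^n([a,b], ℝ)`: it is a basis of `U` and each `p k` has a zero of order `k` at `a`
(derivatives of order `< k` vanish at `a`, the `k`-th does not) and a zero of order
`n - k` at `b`. -/
def IsBernsteinBasisOf (a b : ℝ) (n : ℕ) (U : Submodule ℝ (ℝ → ℝ))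
    (p : Fin (n + 1) → ℝ → ℝ) : Prop :=
  (∀ k, p k ∈ U) ∧ LinearIndependent ℝ p ∧ Submodule.span ℝ (Set.range p) = U ∧
  ∀ k : Fin (n + 1),
    (∀ j : ℕ, j < (k : ℕ) → iteratedDeriv j (p k) a = 0) ∧
    iteratedDeriv (k : ℕ) (p k) a ≠ 0 ∧
    (∀ j : ℕ, j < n - (k : ℕ) → iteratedDeriv j (p k) b = 0) ∧
    iteratedDeriv (n - (k : ℕ)) (p k) b ≠ 0

/-- `q k`, `k = 0, …, n-1`, is a Bernstein basis of the `n`-dimensional space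
`D_{f₀}U = { (f/f₀)' : f ∈ U }`: every `q k` lies in `D_{f₀}U`, every element of `D_{f₀}U`
lies in the span of the `q k`, the family is linearly independent, and each `q k` has a zero
of order `k` at `a` and a zero of order `n - 1 - k` at `b`. -/
def IsBernsteinBasisOfD (a b : ℝ) (n : ℕ) (f₀ : ℝ → ℝ) (U : Submodule ℝ (ℝ → ℝ))
    (q : Fin n → ℝ → ℝ) : Prop :=
  (∀ k, ∃ f ∈ U, q k = deriv (fun x => f x / f₀ x)) ∧
  (∀ f ∈ U, deriv (fun x => f x / f₀ x) ∈ Submodule.span ℝ (Set.range q)) ∧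
  LinearIndependent ℝ q ∧
  ∀ k : Fin n,
    (∀ j : ℕ, j < (k : ℕ) → iteratedDeriv j (q k) a = 0) ∧
    iteratedDeriv (k : ℕ) (q k) a ≠ 0 ∧
    (∀ j : ℕ, j < n - 1 - (k : ℕ) → iteratedDeriv j (q k) b = 0) ∧
    iteratedDeriv (n - 1 - (k : ℕ)) (q k) b ≠ 0

/-- Corollary: if a generalized Bernstein operator with non-decreasing nodes fixing `f₀` and
`f₁` exists, then `(f₁/f₀)' > 0` on the open interval `(a,b)`. -/
theorem deriv_ratio_pos_of_monotone_nodes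
    (n : ℕ) (a b : ℝ) (hab : a < b)
    (U : Submodule ℝ (ℝ → ℝ))
    (hUdim : Module.finrank ℝ ↥U = n + 1)
    (hUsmooth : ∀ f ∈ U, ContDiff ℝ (n : ℕ∞) f)
    (p : Fin (n + 1) → ℝ → ℝ)
    (hp : IsBernsteinBasisOf a b n U p)
    (hpnn : ∀ k, ∀ x ∈ Set.Icc a b, 0 ≤ p k x)
    (f₀ f₁ : ℝ → ℝ) (hf₀U : f₀ ∈ U) (hf₁U : f₁ ∈ U)
    (hf₀pos : ∀ x ∈ Set.Icc a b, 0 < f₀ x)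
    (q : Fin n → ℝ → ℝ)
    (hq : IsBernsteinBasisOfD a b n f₀ U q)
    (hqpos : ∀ k, ∀ x ∈ Set.Ioo a b, 0 < q k x)
    (hmono : StrictMonoOn (fun x => f₁ x / f₀ x) (Set.Icc a b))
    (t : Fin (n + 1) → ℝ) (α : Fin (n + 1) → ℝ)
    (ht : Monotone t) (htmem : ∀ k, t k ∈ Set.Icc a b) (hα : ∀ k, 0 < α k)
    (hB₀ : ∀ x, ∑ k, f₀ (t k) * α k * p k x = f₀ x)
    (hB₁ : ∀ x, ∑ k, f₁ (t k) * α k * p k x = f₁ x) :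
    ∀ x ∈ Set.Ioo a b, 0 < deriv (fun y => f₁ y / f₀ y) x := by
  classical
  have haI : a ∈ Icc a b := ⟨le_refl a, hab.le⟩
  have hbI : b ∈ Icc a b := ⟨hab.le, le_refl b⟩
  -- the case n = 0 : contradiction with strict monotonicity
  rcases Nat.eq_zero_or_pos n with hn0 | hnpos
  · exfalso
    subst hn0
    have hsp : f₀ ∈ Submodule.span ℝ (Set.range p) := by rw [hp.2.2.1]; exact hf₀U
    have hsp1 : f₁ ∈ Submodule.span ℝ (Set.range p) := by rw [hp.2.2.1]; exact hf₁U
    rw [Submodule.mem_span_range_iff_exists_fun ℝ] at hsp hsp1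
    obtain ⟨c₀, hc₀⟩ := hsp
    obtain ⟨c₁, hc₁⟩ := hsp1
    have h0a : f₀ a = c₀ 0 * p 0 a := by
      rw [← hc₀]; simp [Fin.sum_univ_one]
    have h0b : f₀ b = c₀ 0 * p 0 b := by
      rw [← hc₀]; simp [Fin.sum_univ_one]
    have h1a : f₁ a = c₁ 0 * p 0 a := by
      rw [← hc₁]; simp [Fin.sum_univ_one]
    have h1b : f₁ b = c₁ 0 * p 0 b := by
      rw [← hc₁]; simp [Fin.sum_univ_one]
    have hpa : p 0 a ≠ 0 := by
      intro h; have := hf₀pos a haI; rw [h0a, h, mul_zero] at this; exact lt_irrefl 0 this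
    have hpb : p 0 b ≠ 0 := by
      intro h; have := hf₀pos b hbI; rw [h0b, h, mul_zero] at this; exact lt_irrefl 0 this
    have := hmono haI hbI hab
    simp only at this
    rw [h0a, h1a, h0b, h1b, mul_div_mul_right _ _ hpa, mul_div_mul_right _ _ hpb] at this
    exact lt_irrefl _ this
  · -- main case : n = m + 1
    obtain ⟨m, rfl⟩ := Nat.exists_eq_succ_of_ne_zero hnpos.ne'
    set W : Set ℝ := {y | f₀ y ≠ 0} with hWdef
    have hf₀c : Continuous f₀ := (hUsmooth f₀ hf₀U).continuous
    have hW : IsOpen W := by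
      have : W = f₀ ⁻¹' ({0}ᶜ) := rfl
      rw [this]
      exact (isOpen_compl_singleton).preimage hf₀c
    have hIccW : Icc a b ⊆ W := fun x hx => (hf₀pos x hx).ne'
    have haW : a ∈ W := hIccW haI
    have hbW : b ∈ W := hIccW hbI
    have hsm : ∀ f, f ∈ U → ContDiffOn ℝ ((m+1 : ℕ) : WithTop ℕ∞) f W := by
      intro f hf
      have := hUsmooth f hf
      exact_mod_cast this.contDiffOn
    -- quotients
    set ψ : Fin (m + 2) → ℝ → ℝ := fun k x => p k x / f₀ x with hψdef
    have hψs : ∀ k, ContDiffOn ℝ ((m+1 : ℕ) : WithTop ℕ∞) (ψ k) W := fun k =>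
      (hsm (p k) (hp.1 k)).div (hsm f₀ hf₀U) (fun x hx => hx)
    have hqs : ∀ j : Fin (m+1), ContDiffOn ℝ ((m : ℕ) : WithTop ℕ∞) (q j) W := by
      intro j
      obtain ⟨f, hfU, hqj⟩ := hq.1 j
      rw [hqj]
      exact ((hsm f hfU).div (hsm f₀ hf₀U) (fun x hx => hx)).deriv_of_isOpen hW (by norm_cast)
    -- q basis data
    have hqa0 := fun j : Fin (m+1) => (hq.2.2.2 j).1
    have hqaNe := fun j : Fin (m+1) => (hq.2.2.2 j).2.1
    have hqb0 : ∀ j : Fin (m+1), ∀ i : ℕ, i < m - (j:ℕ) → iteratedDeriv i (q j) b = 0 := by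
      intro j i hi
      exact (hq.2.2.2 j).2.2.1 i (by omega)
    have hqbNe : ∀ j : Fin (m+1), iteratedDeriv (m - (j:ℕ)) (q j) b ≠ 0 := by
      intro j
      have := (hq.2.2.2 j).2.2.2
      simpa using this
    have hqaPos : ∀ j : Fin (m+1), 0 < iteratedDeriv (j:ℕ) (q j) a := by
      intro j
      refine lt_of_le_of_ne ?_ (Ne.symm (hqaNe j))
      exact mySignA hW hab haW ((hqs j).of_le (by exact_mod_cast (by omega : (j:ℕ) ≤ m)))
        (hqa0 j) (fun x hx => (hqpos j x hx).le)
    have hqbPos : ∀ j : Fin (m+1), 0 < (-1:ℝ)^(m - (j:ℕ)) * iteratedDeriv (m - (j:ℕ)) (q j) b := by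
      intro j
      refine lt_of_le_of_ne ?_ ?_
      · exact mySignB hW hab hbW ((hqs j).of_le (by exact_mod_cast (by omega : m - (j:ℕ) ≤ m)))
          (hqb0 j) (fun x hx => (hqpos j x hx).le)
      · intro h
        have h2 : ((-1:ℝ))^(m - (j:ℕ)) ≠ 0 := by
          apply pow_ne_zero; norm_num
        exact hqbNe j (by
          rcases mul_eq_zero.1 h.symm with h' | h'
          · exact absurd h' h2
          · exact h')
    -- ψ facts
    have hψnn : ∀ k, ∀ x ∈ Ioo a b, 0 ≤ ψ k x := by
      intro k x hx
      exact div_nonneg (hpnn k x (Ioo_subset_Icc_self hx)) (hf₀pos x (Ioo_subset_Icc_self hx)).le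
    have hEqOn : ∀ k, Set.EqOn (p k) (fun x => ψ k x * f₀ x) W := by
      intro k x hx
      exact (div_mul_cancel₀ (p k x) hx).symm
    have keyA : ∀ k : Fin (m+2), ∀ j : ℕ, j ≤ m+1 → (∀ i, i < j → iteratedDeriv i (ψ k) a = 0) →
        iteratedDeriv j (p k) a = iteratedDeriv j (ψ k) a * f₀ a := by
      intro k j hj hlow
      rw [(hEqOn k).iteratedDeriv_of_isOpen hW j haW]
      exact myLeibniz hW haW ((hψs k).of_le (by exact_mod_cast hj))
        ((hsm f₀ hf₀U).of_le (by exact_mod_cast hj)) hlow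
    have keyB : ∀ k : Fin (m+2), ∀ j : ℕ, j ≤ m+1 → (∀ i, i < j → iteratedDeriv i (ψ k) b = 0) →
        iteratedDeriv j (p k) b = iteratedDeriv j (ψ k) b * f₀ b := by
      intro k j hj hlow
      rw [(hEqOn k).iteratedDeriv_of_isOpen hW j hbW]
      exact myLeibniz hW hbW ((hψs k).of_le (by exact_mod_cast hj))
        ((hsm f₀ hf₀U).of_le (by exact_mod_cast hj)) hlow
    have hf₀a : f₀ a ≠ 0 := haW
    have hf₀b : f₀ b ≠ 0 := hbW
    have hva : ∀ k : Fin (m+2), ∀ j : ℕ, j < (k:ℕ) → iteratedDeriv j (ψ k) a = 0 := by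
      intro k j
      induction j using Nat.strong_induction_on with
      | _ j ih =>
        intro hj
        have hj1 : j ≤ m+1 := by have := k.isLt; omega
        have hkey := keyA k j hj1 (fun i hi => ih i hi (by omega))
        have hz : iteratedDeriv j (p k) a = 0 := (hp.2.2.2 k).1 j hj
        rw [hz] at hkey
        exact (mul_eq_zero.1 hkey.symm).resolve_right hf₀a
    have hvb : ∀ k : Fin (m+2), ∀ j : ℕ, j < m + 1 - (k:ℕ) → iteratedDeriv j (ψ k) b = 0 := by
      intro k j
      induction j using Nat.strong_induction_on with
      | _ j ih =>
        intro hj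
        have hj1 : j ≤ m+1 := by omega
        have hkey := keyB k j hj1 (fun i hi => ih i hi (by omega))
        have hz : iteratedDeriv j (p k) b = 0 := (hp.2.2.2 k).2.2.1 j hj
        rw [hz] at hkey
        exact (mul_eq_zero.1 hkey.symm).resolve_right hf₀b
    have hψaNe : ∀ k : Fin (m+2), iteratedDeriv (k:ℕ) (ψ k) a ≠ 0 := by
      intro k h
      have hkey := keyA k (k:ℕ) (by have := k.isLt; omega) (hva k)
      rw [h, zero_mul] at hkey
      exact (hp.2.2.2 k).2.1 hkey
    have hψbNe : ∀ k : Fin (m+2), iteratedDeriv (m+1-(k:ℕ)) (ψ k) b ≠ 0 := by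
      intro k h
      have hkey := keyB k (m+1-(k:ℕ)) (by omega) (hvb k)
      rw [h, zero_mul] at hkey
      exact (hp.2.2.2 k).2.2.2 hkey
    have hψaPos : ∀ k : Fin (m+2), 0 < iteratedDeriv (k:ℕ) (ψ k) a := by
      intro k
      refine lt_of_le_of_ne ?_ (Ne.symm (hψaNe k))
      exact mySignA hW hab haW
        ((hψs k).of_le (by exact_mod_cast (by have := k.isLt; omega : (k:ℕ) ≤ m+1)))
        (hva k) (hψnn k)
    have hψbPos : ∀ k : Fin (m+2),
        0 < (-1:ℝ)^(m+1-(k:ℕ)) * iteratedDeriv (m+1-(k:ℕ)) (ψ k) b := by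
      intro k
      refine lt_of_le_of_ne ?_ ?_
      · exact mySignB hW hab hbW
          ((hψs k).of_le (by exact_mod_cast (by omega : m+1-(k:ℕ) ≤ m+1)))
          (hvb k) (hψnn k)
      · intro h
        have h2 : ((-1:ℝ))^(m+1-(k:ℕ)) ≠ 0 := by apply pow_ne_zero; norm_num
        rcases mul_eq_zero.1 h.symm with h' | h'
        · exact h2 h'
        · exact hψbNe k h'
    -- coefficients of deriv (ψ k) in the q basis
    have hrep : ∀ k : Fin (m+2), ∃ dd : Fin (m+1) → ℝ,
        ∀ x, deriv (ψ k) x = ∑ j, dd j * q j x := by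
      intro k
      have hmem := hq.2.1 (p k) (hp.1 k)
      rw [Submodule.mem_span_range_iff_exists_fun ℝ] at hmem
      obtain ⟨dd, hdd⟩ := hmem
      refine ⟨dd, fun x => ?_⟩
      have h1 := congrFun hdd x
      simp only [Finset.sum_apply, Pi.smul_apply, smul_eq_mul] at h1
      simp only [hψdef]
      exact h1.symm
    choose d hd using hrep
    have hiDa : ∀ k : Fin (m+2), ∀ i : ℕ, i ≤ m →
        iteratedDeriv (i+1) (ψ k) a = ∑ j, d k j * iteratedDeriv i (q j) a := by
      intro k i hi
      rw [iteratedDeriv_succ']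
      have hfun : deriv (ψ k) = fun x => ∑ j, d k j * q j x := funext (hd k)
      rw [hfun]
      exact myIteratedDeriv_sum hW haW q (d k) hi hqs Finset.univ
    have hiDb : ∀ k : Fin (m+2), ∀ i : ℕ, i ≤ m →
        iteratedDeriv (i+1) (ψ k) b = ∑ j, d k j * iteratedDeriv i (q j) b := by
      intro k i hi
      rw [iteratedDeriv_succ']
      have hfun : deriv (ψ k) = fun x => ∑ j, d k j * q j x := funext (hd k)
      rw [hfun]
      exact myIteratedDeriv_sum hW hbW q (d k) hi hqs Finset.univ
    -- triangularity of the coefficients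
    have dzero_a : ∀ (k : Fin (m+2)) (j : Fin (m+1)), (j:ℕ)+1 < (k:ℕ) → d k j = 0 := by
      intro k j
      have H : ∀ i : ℕ, ∀ j : Fin (m+1), (j:ℕ) = i → (j:ℕ)+1 < (k:ℕ) → d k j = 0 := by
        intro i
        induction i using Nat.strong_induction_on with
        | _ i ih =>
          intro j hji hjk
          subst hji
          have hi_le : (j:ℕ) ≤ m := by have := j.isLt; omega
          have hsum := hiDa k (j:ℕ) hi_le
          rw [hva k ((j:ℕ)+1) (by omega)] at hsum
          have hsingle : ∑ j', d k j' * iteratedDeriv (j:ℕ) (q j') a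
              = d k j * iteratedDeriv (j:ℕ) (q j) a := by
            apply Finset.sum_eq_single_of_mem j (Finset.mem_univ j)
            intro j' _ hne
            rcases lt_trichotomy (j':ℕ) (j:ℕ) with h | h | h
            · rw [ih (j':ℕ) h j' rfl (by omega), zero_mul]
            · exact absurd (Fin.val_injective h) hne
            · rw [hqa0 j' (j:ℕ) h, mul_zero]
          rw [hsingle] at hsum
          have hpos := hqaPos j
          rcases mul_eq_zero.1 hsum.symm with h' | h'
          · exact h'
          · exact absurd h' hpos.ne'
      exact H (j:ℕ) j rfl
    have dzero_b : ∀ (k : Fin (m+2)) (j : Fin (m+1)), (k:ℕ) < (j:ℕ) → d k j = 0 := by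
      intro k j
      have H : ∀ i : ℕ, ∀ j : Fin (m+1), m - (j:ℕ) = i → (k:ℕ) < (j:ℕ) → d k j = 0 := by
        intro i
        induction i using Nat.strong_induction_on with
        | _ i ih =>
          intro j hji hjk
          have hjm : (j:ℕ) ≤ m := by have := j.isLt; omega
          have hkm : (k:ℕ) ≤ m+1 := by have := k.isLt; omega
          have hi_le : m - (j:ℕ) ≤ m := by omega
          have hsum := hiDb k (m - (j:ℕ)) hi_le
          rw [hvb k (m - (j:ℕ) + 1) (by omega)] at hsum
          have hsingle : ∑ j', d k j' * iteratedDeriv (m - (j:ℕ)) (q j') b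
              = d k j * iteratedDeriv (m - (j:ℕ)) (q j) b := by
            apply Finset.sum_eq_single_of_mem j (Finset.mem_univ j)
            intro j' _ hne
            have hj'm : (j':ℕ) ≤ m := by have := j'.isLt; omega
            rcases lt_trichotomy (j':ℕ) (j:ℕ) with h | h | h
            · rw [hqb0 j' (m - (j:ℕ)) (by omega), mul_zero]
            · exact absurd (Fin.val_injective h) hne
            · rw [ih (m - (j':ℕ)) (by omega) j' rfl (by omega), zero_mul]
          rw [hsingle] at hsum
          rcases mul_eq_zero.1 hsum.symm with h' | h'
          · exact h'
          · exact absurd h' (hqbNe j)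
      exact H (m - (j:ℕ)) j rfl
    have dlead_a : ∀ j : Fin (m+1), 0 < d j.succ j := by
      intro j
      have hjm : (j:ℕ) ≤ m := by have := j.isLt; omega
      have hsum := hiDa j.succ (j:ℕ) hjm
      have hsingle : ∑ j', d j.succ j' * iteratedDeriv (j:ℕ) (q j') a
          = d j.succ j * iteratedDeriv (j:ℕ) (q j) a := by
        apply Finset.sum_eq_single_of_mem j (Finset.mem_univ j)
        intro j' _ hne
        rcases lt_trichotomy (j':ℕ) (j:ℕ) with h | h | h
        · rw [dzero_a j.succ j' (by simp [Fin.val_succ]; omega), zero_mul]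
        · exact absurd (Fin.val_injective h) hne
        · rw [hqa0 j' (j:ℕ) h, mul_zero]
      rw [hsingle] at hsum
      have hL : 0 < iteratedDeriv ((j:ℕ)+1) (ψ j.succ) a := by
        have := hψaPos j.succ
        rwa [Fin.val_succ] at this
      rw [hsum] at hL
      have hq' := hqaPos j
      by_contra hcon
      push_neg at hcon
      nlinarith
    have dlead_b : ∀ j : Fin (m+1), d j.castSucc j < 0 := by
      intro j
      have hjm : (j:ℕ) ≤ m := by have := j.isLt; omega
      have hsum := hiDb j.castSucc (m - (j:ℕ)) (by omega)
      have hsingle : ∑ j', d j.castSucc j' * iteratedDeriv (m - (j:ℕ)) (q j') b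
          = d j.castSucc j * iteratedDeriv (m - (j:ℕ)) (q j) b := by
        apply Finset.sum_eq_single_of_mem j (Finset.mem_univ j)
        intro j' _ hne
        have hj'm : (j':ℕ) ≤ m := by have := j'.isLt; omega
        rcases lt_trichotomy (j':ℕ) (j:ℕ) with h | h | h
        · rw [hqb0 j' (m - (j:ℕ)) (by omega), mul_zero]
        · exact absurd (Fin.val_injective h) hne
        · rw [dzero_b j.castSucc j' (by simp [Fin.coe_castSucc]; omega), zero_mul]
      rw [hsingle] at hsum
      have hexp : m + 1 - ((j.castSucc : Fin (m+2)) : ℕ) = (m - (j:ℕ)) + 1 := by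
        simp only [Fin.coe_castSucc]
        omega
      have hB := hψbPos j.castSucc
      rw [hexp] at hB
      have hBeq : iteratedDeriv (m - (j:ℕ) + 1) (ψ j.castSucc) b
          = d j.castSucc j * iteratedDeriv (m - (j:ℕ)) (q j) b := hsum
      have hA := hqbPos j
      set e := m - (j:ℕ) with he
      rw [pow_succ] at hB
      -- hB : 0 < (-1)^e * (-1) * iteratedDeriv (e+1) (ψ j.castSucc) b
      rw [hBeq] at hB
      by_contra hcon
      push_neg at hcon
      nlinarith
    -- differentiability of the quotients on W
    have hψdiff : ∀ k, ∀ x ∈ W, DifferentiableAt ℝ (ψ k) x := fun k x hx =>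
      ((hψs k).differentiableOn
        (by simp)).differentiableAt (hW.mem_nhds hx)
    have hderiv_sum : ∀ (c : Fin (m+2) → ℝ), ∀ x ∈ W,
        deriv (fun y => ∑ k, c k * ψ k y) x = ∑ k, c k * deriv (ψ k) x := by
      intro c x hx
      have : HasDerivAt (fun y => ∑ k, c k * ψ k y) (∑ k, c k * deriv (ψ k) x) x := by
        apply HasDerivAt.fun_sum
        intro k _
        exact HasDerivAt.const_mul (c k) (hψdiff k x hx).hasDerivAt
      exact this.deriv
    -- the operator identities, divided by f₀
    have hS₀ : ∀ x ∈ W, ∑ k, (f₀ (t k) * α k) * ψ k x = 1 := by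
      intro x hx
      have h1 : ∑ k, (f₀ (t k) * α k) * ψ k x = (∑ k, f₀ (t k) * α k * p k x) / f₀ x := by
        rw [Finset.sum_div]
        exact Finset.sum_congr rfl (fun k _ => by simp only [hψdef]; rw [mul_div_assoc])
      rw [h1, hB₀ x, div_self hx]
    have hS₁ : ∀ x ∈ W, ∑ k, (f₁ (t k) * α k) * ψ k x = f₁ x / f₀ x := by
      intro x hx
      have h1 : ∑ k, (f₁ (t k) * α k) * ψ k x = (∑ k, f₁ (t k) * α k * p k x) / f₀ x := by
        rw [Finset.sum_div]
        exact Finset.sum_congr rfl (fun k _ => by simp only [hψdef]; rw [mul_div_assoc])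
      rw [h1, hB₁ x]
    have hD₀ : ∀ x ∈ W, ∑ k, (f₀ (t k) * α k) * deriv (ψ k) x = 0 := by
      intro x hx
      have hev : (fun y => ∑ k, (f₀ (t k) * α k) * ψ k y) =ᶠ[𝓝 x] (fun _ => (1:ℝ)) := by
        filter_upwards [hW.mem_nhds hx] with y hy using hS₀ y hy
      have h2 := hev.deriv_eq
      rw [hderiv_sum _ x hx] at h2
      simpa using h2
    have hD₁ : ∀ x ∈ W, deriv (fun y => f₁ y / f₀ y) x
        = ∑ k, (f₁ (t k) * α k) * deriv (ψ k) x := by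
      intro x hx
      have hev : (fun y => ∑ k, (f₁ (t k) * α k) * ψ k y) =ᶠ[𝓝 x] (fun y => f₁ y / f₀ y) := by
        filter_upwards [hW.mem_nhds hx] with y hy using hS₁ y hy
      have h2 := hev.deriv_eq
      rw [hderiv_sum _ x hx] at h2
      exact h2.symm
    -- rearrangement into the q basis
    have hrearr : ∀ (c : Fin (m+2) → ℝ) (x : ℝ),
        ∑ k, c k * deriv (ψ k) x = ∑ j, (∑ k, c k * d k j) * q j x := by
      intro c x
      calc ∑ k, c k * deriv (ψ k) x = ∑ k, ∑ j, c k * (d k j * q j x) := by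
            refine Finset.sum_congr rfl (fun k _ => ?_)
            rw [hd k x, Finset.mul_sum]
        _ = ∑ j, ∑ k, c k * (d k j * q j x) := Finset.sum_comm
        _ = ∑ j, (∑ k, c k * d k j) * q j x := by
            refine Finset.sum_congr rfl (fun j _ => ?_)
            rw [Finset.sum_mul]
            exact Finset.sum_congr rfl (fun k _ => by ring)
    set E₀ : Fin (m+1) → ℝ := fun j => ∑ k, (f₀ (t k) * α k) * d k j with hE₀def
    set E₁ : Fin (m+1) → ℝ := fun j => ∑ k, (f₁ (t k) * α k) * d k j with hE₁def
    have hE₀W : ∀ x ∈ W, ∑ j, E₀ j * q j x = 0 := by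
      intro x hx
      rw [← hrearr (fun k => f₀ (t k) * α k) x]
      exact hD₀ x hx
    have hE₁W : ∀ x ∈ W, deriv (fun y => f₁ y / f₀ y) x = ∑ j, E₁ j * q j x := by
      intro x hx
      rw [← hrearr (fun k => f₁ (t k) * α k) x]
      exact hD₁ x hx
    -- E₀ vanishes identically
    have hE₀zero : ∀ j, E₀ j = 0 := by
      have hiDzero : ∀ i : ℕ, iteratedDeriv i (fun x => ∑ j, E₀ j * q j x) a = 0 := by
        intro i
        have hev : (fun x => ∑ j, E₀ j * q j x) =ᶠ[𝓝 a] (fun _ => (0:ℝ)) := by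
          filter_upwards [hW.mem_nhds haW] with y hy using hE₀W y hy
        rw [hev.iteratedDeriv_eq i]
        exact myIteratedDeriv_zeroFun i a
      intro j
      have H : ∀ i : ℕ, ∀ j : Fin (m+1), (j:ℕ) = i → E₀ j = 0 := by
        intro i
        induction i using Nat.strong_induction_on with
        | _ i ih =>
          intro j hji
          subst hji
          have hjm : (j:ℕ) ≤ m := by have := j.isLt; omega
          have hsum := myIteratedDeriv_sum hW haW q E₀ hjm hqs Finset.univ
          rw [hiDzero (j:ℕ)] at hsum
          have hsingle : ∑ j', E₀ j' * iteratedDeriv (j:ℕ) (q j') a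
              = E₀ j * iteratedDeriv (j:ℕ) (q j) a := by
            apply Finset.sum_eq_single_of_mem j (Finset.mem_univ j)
            intro j' _ hne
            rcases lt_trichotomy (j':ℕ) (j:ℕ) with h | h | h
            · rw [ih (j':ℕ) h j' rfl, zero_mul]
            · exact absurd (Fin.val_injective h) hne
            · rw [hqa0 j' (j:ℕ) h, mul_zero]
          rw [hsingle] at hsum
          rcases mul_eq_zero.1 hsum.symm with h' | h'
          · exact h'
          · exact absurd h' (hqaPos j).ne'
      exact H (j:ℕ) j rfl
    -- the two-term expansion of the coefficients
    have hpair : ∀ (c : Fin (m+2) → ℝ) (j : Fin (m+1)),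
        ∑ k, c k * d k j = c j.castSucc * d j.castSucc j + c j.succ * d j.succ j := by
      intro c j
      have hne : (j.castSucc : Fin (m+2)) ≠ j.succ := (Fin.castSucc_lt_succ (i := j)).ne
      have hz : ∀ k ∈ (Finset.univ : Finset (Fin (m+2))),
          k ∉ ({j.castSucc, j.succ} : Finset (Fin (m+2))) → c k * d k j = 0 := by
        intro k _ hk
        simp only [Finset.mem_insert, Finset.mem_singleton] at hk
        push_neg at hk
        have h1 : (k:ℕ) ≠ (j:ℕ) := fun h => hk.1 (Fin.val_injective (by simpa using h))
        have h2 : (k:ℕ) ≠ (j:ℕ)+1 := fun h => hk.2 (Fin.val_injective (by simpa using h))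
        rcases lt_trichotomy (k:ℕ) (j:ℕ) with h | h | h
        · rw [dzero_b k j h, mul_zero]
        · exact absurd h h1
        · rw [dzero_a k j (by omega), mul_zero]
      rw [← Finset.sum_subset (Finset.subset_univ ({j.castSucc, j.succ} : Finset (Fin (m+2)))) hz,
        Finset.sum_pair hne]
    -- E₁ is non-negative
    have hgmono := hmono.monotoneOn
    have hE₁nn : ∀ j, 0 ≤ E₁ j := by
      intro j
      have h0 := hE₀zero j
      rw [hE₀def] at h0
      simp only at h0
      rw [hpair (fun k => f₀ (t k) * α k) j] at h0
      have hs₁pos : 0 < f₀ (t j.succ) * α j.succ * d j.succ j :=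
        mul_pos (mul_pos (hf₀pos _ (htmem j.succ)) (hα j.succ)) (dlead_a j)
      have hgt : ∀ k : Fin (m+2), f₁ (t k) * α k * d k j
          = (f₁ (t k) / f₀ (t k)) * (f₀ (t k) * α k * d k j) := by
        intro k
        have hne : f₀ (t k) ≠ 0 := (hf₀pos _ (htmem k)).ne'
        field_simp
      rw [hE₁def]
      simp only
      rw [hpair (fun k => f₁ (t k) * α k) j, hgt j.castSucc, hgt j.succ]
      have hcs : f₀ (t j.castSucc) * α j.castSucc * d j.castSucc j
          = -(f₀ (t j.succ) * α j.succ * d j.succ j) := by linarith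
      rw [hcs]
      have hgle : f₁ (t j.castSucc) / f₀ (t j.castSucc) ≤ f₁ (t j.succ) / f₀ (t j.succ) :=
        hgmono (htmem j.castSucc) (htmem j.succ) (ht (Fin.castSucc_lt_succ (i := j)).le)
      nlinarith
    -- E₁ is not identically zero
    have hE₁ex : ∃ j, 0 < E₁ j := by
      by_contra hall
      push_neg at hall
      have hE₁z : ∀ j, E₁ j = 0 := fun j => le_antisymm (hall j) (hE₁nn j)
      have hg0 : ∀ x ∈ W, deriv (fun y => f₁ y / f₀ y) x = 0 := by
        intro x hx
        rw [hE₁W x hx]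
        simp [hE₁z]
      set u := a + (b-a)/3 with hu
      set v := b - (b-a)/3 with hv
      have hau : a < u := by rw [hu]; linarith
      have huv : u < v := by rw [hu, hv]; linarith
      have hvb : v < b := by rw [hv]; linarith
      have hsubW : Icc u v ⊆ W := fun x hx => hIccW ⟨by linarith [hx.1], by linarith [hx.2]⟩
      have hgdiff : ∀ x ∈ Icc u v, DifferentiableAt ℝ (fun y => f₁ y / f₀ y) x := by
        intro x hx
        have hxW : x ∈ W := hsubW hx
        have h1 : DifferentiableAt ℝ f₁ x :=
          ((hsm f₁ hf₁U).differentiableOn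
            (by simp)).differentiableAt
            (hW.mem_nhds hxW)
        have h0 : DifferentiableAt ℝ f₀ x :=
          ((hsm f₀ hf₀U).differentiableOn
            (by simp)).differentiableAt
            (hW.mem_nhds hxW)
        exact h1.div h0 hxW
      obtain ⟨cpt, hcpt, hceq⟩ := exists_deriv_eq_slope (fun y => f₁ y / f₀ y) huv
        (fun x hx => (hgdiff x hx).continuousAt.continuousWithinAt)
        (fun x hx => (hgdiff x (Ioo_subset_Icc_self hx)).differentiableWithinAt)
      rw [hg0 cpt (hsubW (Ioo_subset_Icc_self hcpt))] at hceq
      have hne : v - u ≠ 0 := by linarith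
      have heq : f₁ v / f₀ v = f₁ u / f₀ u := by
        field_simp at hceq
        have h3 := hceq
        linarith [hceq]
      have hlt := hmono (⟨hau.le, by linarith⟩ : u ∈ Icc a b)
        (⟨by linarith, hvb.le⟩ : v ∈ Icc a b) huv
      simp only at hlt
      rw [heq] at hlt
      exact lt_irrefl _ hlt
    obtain ⟨j₀, hj₀⟩ := hE₁ex
    -- conclusion
    intro x hx
    have hxW : x ∈ W := hIccW (Ioo_subset_Icc_self hx)
    rw [hE₁W x hxW]
    apply Finset.sum_pos' (fun j _ => mul_nonneg (hE₁nn j) (hqpos j x hx).le)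
    exact ⟨j₀, Finset.mem_univ j₀, mul_pos hj₀ (hqpos j₀ x hx)⟩
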